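/- Let F : X ⇒ Y be a set-valued mapping between Euclidean spaces whose graph is locally closed around (x̄, ȳ) ∈ gph F. If F is metrically subregular at x̄ for ȳ, then the kernel of the graphical derivative DF(x̄|ȳ) equals the tangent cone T_{F⁻¹(ȳ)}(x̄). -/
import Mathlib


open Filter Topology Metric Set
open scoped RealInnerProductSpace NNReal ENNReal

noncomputable section

/-- Bouligand (contingent) tangent cone. -/
def tanCone {G : Type*} [AddCommGroup G] [Module ℝ G] [TopologicalSpace G]
    (s : Set G) (x : G) : Set G :=
  {w | ∃ (t : ℕ → ℝ) (wk : ℕ → G), (∀ n, 0 < t n) ∧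
    Tendsto t atTop (𝓝 0) ∧ Tendsto wk atTop (𝓝 w) ∧ ∀ n, x + t n • wk n ∈ s}

variable {E F : Type*} [NormedAddCommGroup E] [InnerProductSpace ℝ E]
  [NormedAddCommGroup F] [InnerProductSpace ℝ F]

/-- Graph of a set-valued mapping. -/
def gph (S : E → Set F) : Set (E × F) := {p | p.2 ∈ S p.1}

/-- Graphical derivative. -/
def gder (S : E → Set F) (x : E) (y : F) (w : E) : Set F :=
  {z | (w, z) ∈ tanCone (gph S) (x, y)}

/-- Local closedness of the graph around a point. -/
def LocallyClosedGraph (S : E → Set F) (x : E) (y : F) : Prop :=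
  ∃ U ∈ 𝓝 ((x, y) : E × F), IsClosed (U ∩ gph S)

/-- Metric subregularity of a set-valued mapping at `x` for `y`. -/
def MetrSubreg (S : E → Set F) (x : E) (y : F) : Prop :=
  ∃ κ : ℝ≥0, ∃ ε : ℝ, 0 < ε ∧ ∀ x' ∈ ball x ε,
    EMetric.infEdist x' {u | y ∈ S u} ≤ (κ : ℝ≥0∞) * EMetric.infEdist y (S x')

/-- Convex subdifferential of an extended-real-valued function. -/
def subdiff (φ : E → EReal) (x : E) : Set E :=
  {v | ∀ u, φ x + ((⟪v, u - x⟫ : ℝ) : EReal) ≤ φ u}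

/-- Properness. -/
def ProperFn (φ : E → EReal) : Prop := (∀ x, φ x ≠ ⊥) ∧ ∃ x, φ x ≠ ⊤

/-- Convexity via the epigraph. -/
def ConvexFn (φ : E → EReal) : Prop := Convex ℝ {p : E × ℝ | φ p.1 ≤ (p.2 : EReal)}

/-- Fenchel conjugate. -/
def conjFn (φ : E → EReal) (v : E) : EReal := ⨆ x, ((⟪v, x⟫ : ℝ) : EReal) - φ x

/-- Second subderivative. -/
def secondSubderiv (φ : E → EReal) (x v w : E) : EReal :=
  Filter.liminf (fun p : ℝ × E =>
    (((2 / p.1 ^ 2 : ℝ)) : EReal) *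
      (φ (x + p.1 • p.2) - φ x - ((p.1 * ⟪v, p.2⟫ : ℝ) : EReal)))
    ((𝓝[>] (0 : ℝ)) ×ˢ 𝓝 w)

/-- Quadratic growth condition at `x` for `v`. -/
def QuadGrowth (φ : E → EReal) (x v : E) : Prop :=
  ∃ c : ℝ, 0 < c ∧ ∃ ε : ℝ, 0 < ε ∧ ∀ u ∈ ball x ε,
    φ x + ((⟪v, u - x⟫ + c / 2 * (infDist u {u' | v ∈ subdiff φ u'}) ^ 2 : ℝ) : EReal) ≤ φ u


/-- under metric subregularity, the kernel of the graphical derivative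
equals the tangent cone to `F⁻¹(yb)` at `xb`. -/
theorem stmt1 {E F : Type*} [NormedAddCommGroup E] [InnerProductSpace ℝ E]
    [NormedAddCommGroup F] [InnerProductSpace ℝ F]
    [FiniteDimensional ℝ E] [FiniteDimensional ℝ F]
    (S : E → Set F) (xb : E) (yb : F) (hxy : yb ∈ S xb)
    (hcl : LocallyClosedGraph S xb yb) (hms : MetrSubreg S xb yb) :
    {w | (0 : F) ∈ gder S xb yb w} = tanCone {x | yb ∈ S x} xb := by
  ext w
  simp only [mem_setOf_eq]
  constructor
  · rintro ⟨t, wz, ht, ht0, hwz, hmem⟩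
    obtain ⟨κ, ε, hε, hsub⟩ := hms
    set u : ℕ → E := fun n => (wz n).1 with hu_def
    set z : ℕ → F := fun n => (wz n).2 with hz_def
    have hu : Tendsto u atTop (𝓝 w) := (continuous_fst.tendsto _).comp hwz
    have hz : Tendsto z atTop (𝓝 0) := (continuous_snd.tendsto _).comp hwz
    have hmem' : ∀ n, yb + t n • z n ∈ S (xb + t n • u n) := by
      intro n
      have := hmem n
      simpa [gph, hu_def, hz_def] using this
    have hxball : Tendsto (fun n => xb + t n • u n) atTop (𝓝 xb) := by
      have h1 : Tendsto (fun n => t n • u n) atTop (𝓝 ((0:ℝ) • w)) := ht0.smul hu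
      rw [zero_smul] at h1
      simpa using tendsto_const_nhds.add h1
    have hball : ∀ᶠ n in atTop, xb + t n • u n ∈ ball xb ε :=
      hxball.eventually (isOpen_ball.mem_nhds (mem_ball_self hε))
    obtain ⟨N, hN⟩ := eventually_atTop.1 hball
    have key : ∀ n : ℕ, ∃ p ∈ {x | yb ∈ S x},
        dist (xb + t (n + N) • u (n + N)) p
          < (κ : ℝ) * ‖t (n + N) • z (n + N)‖ + t (n + N) * (1 / (n + 1)) := by
      intro n
      set m := n + N with hm
      have hmN : N ≤ m := Nat.le_add_left N n
      have h1 := hsub _ (hN m hmN)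
      have h2 : EMetric.infEdist yb (S (xb + t m • u m)) ≤ edist yb (yb + t m • z m) :=
        EMetric.infEdist_le_edist_of_mem (hmem' m)
      have h3 : edist yb (yb + t m • z m) = ENNReal.ofReal ‖t m • z m‖ := by
        rw [edist_dist, dist_self_add_right]
      have h4 : EMetric.infEdist (xb + t m • u m) {x | yb ∈ S x}
          ≤ ENNReal.ofReal ((κ : ℝ) * ‖t m • z m‖) := by
        calc EMetric.infEdist (xb + t m • u m) {x | yb ∈ S x}
            ≤ (κ : ℝ≥0∞) * EMetric.infEdist yb (S (xb + t m • u m)) := h1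
          _ ≤ (κ : ℝ≥0∞) * ENNReal.ofReal ‖t m • z m‖ := by
              exact mul_le_mul_right (h3 ▸ h2) _
          _ = ENNReal.ofReal ((κ : ℝ) * ‖t m • z m‖) := by
              rw [ENNReal.ofReal_mul κ.coe_nonneg, ENNReal.ofReal_coe_nnreal]
      have hpos : (0:ℝ) < t m * (1 / (n + 1)) := by
        apply mul_pos (ht m)
        positivity
      have h5 : EMetric.infEdist (xb + t m • u m) {x | yb ∈ S x}
          < ENNReal.ofReal ((κ : ℝ) * ‖t m • z m‖ + t m * (1 / (n + 1))) := by
        refine lt_of_le_of_lt h4 ?_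
        rw [ENNReal.ofReal_lt_ofReal_iff (by positivity)]
        linarith [mul_nonneg κ.coe_nonneg (norm_nonneg (t m • z m))]
      obtain ⟨p, hpT, hpe⟩ := EMetric.infEdist_lt_iff.mp h5
      exact ⟨p, hpT, (edist_lt_ofReal).mp hpe⟩
    choose p hpT hpd using key
    set wk' : ℕ → E := fun n => (t (n + N))⁻¹ • (p n - xb) with hwk'_def
    have htne : ∀ n : ℕ, t (n + N) ≠ 0 := fun n => (ht _).ne'
    have hmem'' : ∀ n, xb + t (n + N) • wk' n ∈ {x | yb ∈ S x} := by
      intro n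
      have : xb + t (n + N) • wk' n = p n := by
        rw [hwk'_def]
        simp only [smul_inv_smul₀ (htne n)]
        abel
      rw [this]; exact hpT n
    have hshift : Tendsto (fun n : ℕ => n + N) atTop atTop := tendsto_add_atTop_nat N
    have hdiff : ∀ n : ℕ, ‖wk' n - u (n + N)‖
        ≤ (κ : ℝ) * ‖z (n + N)‖ + 1 / (n + 1) := by
      intro n
      have hteq : wk' n - u (n + N) = (t (n + N))⁻¹ • (p n - (xb + t (n + N) • u (n + N))) := by
        rw [hwk'_def]
        simp only [smul_sub, smul_add, smul_smul, inv_mul_cancel₀ (htne n), one_smul]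
        abel
      rw [hteq, norm_smul, norm_inv, Real.norm_eq_abs, abs_of_pos (ht _)]
      have hd := (hpd n).le
      rw [dist_eq_norm, norm_sub_rev] at hd
      have hzn : ‖t (n + N) • z (n + N)‖ = t (n + N) * ‖z (n + N)‖ := by
        rw [norm_smul, Real.norm_eq_abs, abs_of_pos (ht _)]
      rw [hzn] at hd
      have htinv : (0:ℝ) < (t (n + N))⁻¹ := inv_pos.mpr (ht _)
      calc (t (n + N))⁻¹ * ‖p n - (xb + t (n + N) • u (n + N))‖
          ≤ (t (n + N))⁻¹ * ((κ : ℝ) * (t (n + N) * ‖z (n + N)‖) + t (n + N) * (1 / (n + 1))) := by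
            exact mul_le_mul_of_nonneg_left hd htinv.le
        _ = (κ : ℝ) * ‖z (n + N)‖ + 1 / (n + 1) := by
            have hinv : (t (n + N))⁻¹ * t (n + N) = 1 := inv_mul_cancel₀ (htne n)
            rw [mul_add]
            congr 1
            · rw [show (κ : ℝ) * (t (n + N) * ‖z (n + N)‖)
                  = t (n + N) * ((κ : ℝ) * ‖z (n + N)‖) by ring, ← mul_assoc, hinv, one_mul]
            · rw [← mul_assoc, hinv, one_mul]
    have hbound : Tendsto (fun n : ℕ => (κ : ℝ) * ‖z (n + N)‖ + 1 / (n + 1)) atTop (𝓝 0) := by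
      have h1 : Tendsto (fun n : ℕ => ‖z (n + N)‖) atTop (𝓝 0) :=
        tendsto_norm_zero.comp (hz.comp hshift)
      have h2 : Tendsto (fun n : ℕ => (κ : ℝ) * ‖z (n + N)‖) atTop (𝓝 ((κ : ℝ) * 0)) :=
        h1.const_mul _
      rw [mul_zero] at h2
      have h3 : Tendsto (fun n : ℕ => (1 : ℝ) / (n + 1)) atTop (𝓝 0) :=
        tendsto_one_div_add_atTop_nhds_zero_nat
      simpa using h2.add h3
    have hdz : Tendsto (fun n => wk' n - u (n + N)) atTop (𝓝 0) :=
      squeeze_zero_norm hdiff hbound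
    have hwk'tend : Tendsto wk' atTop (𝓝 w) := by
      have := hdz.add (hu.comp hshift)
      simpa using this
    exact ⟨fun n => t (n + N), wk', fun n => ht _, ht0.comp hshift, hwk'tend, hmem''⟩
  · rintro ⟨t, wk, ht, ht0, hwk, hmem⟩
    refine ⟨t, fun n => (wk n, 0), ht, ht0, hwk.prodMk_nhds tendsto_const_nhds, fun n => ?_⟩
    simpa [gph] using hmem n

end
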